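/- arXiv:2012.06519 — 4 statements merged into one kernel-verified Lean document; each statement's English description precedes it below -/
import Mathlib

section
/- For any d ≥ 1 and real p > 1, the ℓ1 unit ball in ℝ^d is contained in the ℓq unit ball (where 1/p + 1/q = 1), and every point of the ℓq unit ball is within ℓq-distance 1 − d^(−1/p) of the ℓ1 unit ball; that is, B_q^d ⊆ B_1^d + (1 − d^(−1/p))·B_q^d. -/
theorem stmt_1 (d : ℕ) (hd : 1 ≤ d) (p q : ℝ) (hp : 1 < p) (hq : 1 < q)
    (hpq : 1 / p + 1 / q = 1) :
    (∀ x : Fin d → ℝ, (∑ i, |x i|) ≤ 1 → (∑ i, |x i| ^ q) ≤ 1) ∧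
    (∀ x : Fin d → ℝ, (∑ i, |x i| ^ q) ≤ 1 →
      ∃ a b : Fin d → ℝ, (∑ i, |a i|) ≤ 1 ∧ (∑ i, |b i| ^ q) ≤ 1 ∧
        x = a + (1 - (d : ℝ) ^ (-(1 / p))) • b) := by
  have hq0 : (0 : ℝ) < q := lt_trans one_pos hq
  constructor
  · intro x hx
    have h1 : ∀ i : Fin d, |x i| ^ q ≤ |x i| := by
      intro i
      have hle : |x i| ≤ 1 := by
        have : |x i| ≤ ∑ j, |x j| :=
          Finset.single_le_sum (fun j _ => abs_nonneg (x j)) (Finset.mem_univ i)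
        linarith
      rcases eq_or_lt_of_le (abs_nonneg (x i)) with h | h
      · rw [← h, Real.zero_rpow hq0.ne']
      · calc |x i| ^ q ≤ |x i| ^ (1 : ℝ) :=
              Real.rpow_le_rpow_of_exponent_ge h hle hq.le
          _ = |x i| := Real.rpow_one _
    calc (∑ i, |x i| ^ q) ≤ ∑ i, |x i| := Finset.sum_le_sum fun i _ => h1 i
      _ ≤ 1 := hx
  · intro x hx
    -- Hölder: ∑ |x i| ≤ d ^ (1/p)
    have hsum : (∑ i, |x i|) ≤ (d : ℝ) ^ (1 / p) := by
      have h := Real.rpow_sum_le_const_mul_sum_rpow Finset.univ x hq.le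
      have hcard : ((Finset.univ : Finset (Fin d)).card : ℝ) = (d : ℝ) := by simp
      rw [hcard] at h
      have hd0 : (0 : ℝ) < (d : ℝ) := by exact_mod_cast hd
      have h2 : (∑ i, |x i|) ^ q ≤ (d : ℝ) ^ (q - 1) := by
        calc (∑ i, |x i|) ^ q ≤ (d : ℝ) ^ (q - 1) * ∑ i, |x i| ^ q := h
          _ ≤ (d : ℝ) ^ (q - 1) * 1 := by
              exact mul_le_mul_of_nonneg_left hx (Real.rpow_nonneg hd0.le _)
          _ = (d : ℝ) ^ (q - 1) := mul_one _
      have hS : (0 : ℝ) ≤ ∑ i, |x i| := Finset.sum_nonneg fun i _ => abs_nonneg _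
      have h3 : ((∑ i, |x i|) ^ q) ^ (1 / q) ≤ ((d : ℝ) ^ (q - 1)) ^ (1 / q) :=
        Real.rpow_le_rpow (Real.rpow_nonneg hS _) h2 (by positivity)
      rw [← Real.rpow_mul hS, ← Real.rpow_mul hd0.le] at h3
      have hexp : (q - 1) * (1 / q) = 1 / p := by
        field_simp
        field_simp at hpq
        linarith
      rw [mul_one_div, div_self hq0.ne', Real.rpow_one, hexp] at h3
      exact h3
    have hd0 : (0 : ℝ) < (d : ℝ) := by exact_mod_cast hd
    refine ⟨((d : ℝ) ^ (-(1 / p))) • x, x, ?_, hx, ?_⟩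
    · have : ∑ i, |((d : ℝ) ^ (-(1 / p))) * x i| = (d : ℝ) ^ (-(1 / p)) * ∑ i, |x i| := by
        rw [Finset.mul_sum]
        refine Finset.sum_congr rfl fun i _ => ?_
        rw [abs_mul, abs_of_nonneg (Real.rpow_nonneg hd0.le _)]
      simp only [Pi.smul_apply, smul_eq_mul]
      rw [this]
      calc (d : ℝ) ^ (-(1 / p)) * ∑ i, |x i|
          ≤ (d : ℝ) ^ (-(1 / p)) * (d : ℝ) ^ (1 / p) :=
            mul_le_mul_of_nonneg_left hsum (Real.rpow_nonneg hd0.le _)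
        _ = 1 := by rw [← Real.rpow_add hd0, neg_add_cancel, Real.rpow_zero]
    · funext i
      simp only [Pi.add_apply, Pi.smul_apply, smul_eq_mul]
      ring
end

section
/- Let 0 < ε ≤ 1/2, d ≥ 2, and p ≥ log d / ε (natural log). Then 1 − d^(−1/p) ≤ ε, and consequently B_q^d ⊆ B_1^d + ε·B_q^d where 1/p + 1/q = 1. -/
theorem stmt_2 (ε : ℝ) (hε0 : 0 < ε) (hε1 : ε ≤ 1 / 2) (d : ℕ) (hd : 2 ≤ d)
    (p q : ℝ) (hq : 1 < q) (hpq : 1 / p + 1 / q = 1)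
    (hp : Real.log d / ε ≤ p) :
    1 - (d : ℝ) ^ (-(1 / p)) ≤ ε ∧
    (∀ x : Fin d → ℝ, (∑ i, |x i| ^ q) ≤ 1 →
      ∃ a b : Fin d → ℝ, (∑ i, |a i|) ≤ 1 ∧ (∑ i, |b i| ^ q) ≤ 1 ∧
        x = a + ε • b) := by
  have hq0 : 0 < q := lt_trans one_pos hq
  have hq1 : 1 / q < 1 := by
    rw [div_lt_one hq0]; exact hq
  have hq1' : 0 < 1 / q := by positivity
  have h1p : 0 < 1 / p := by linarith
  have hp0 : 0 < p := by
    by_contra h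
    push_neg at h
    have : 1 / p ≤ 0 := div_nonpos_of_nonneg_of_nonpos zero_le_one h
    linarith
  have hp1 : 1 < p := by
    have : 1 / p < 1 := by linarith
    exact (div_lt_one hp0).mp this
  have hd1 : (1 : ℝ) < (d : ℝ) := by exact_mod_cast lt_of_lt_of_le one_lt_two hd
  have hd0 : (0 : ℝ) < (d : ℝ) := lt_trans one_pos hd1
  have hlog : 0 < Real.log d := Real.log_pos hd1
  have hle : Real.log d / p ≤ ε := by
    rw [div_le_iff₀ hp0]
    rw [div_le_iff₀ hε0] at hp
    linarith [mul_comm ε p]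
  have hrw : (d : ℝ) ^ (-(1 / p)) = Real.exp (-(Real.log d / p)) := by
    rw [Real.rpow_def_of_pos hd0]
    ring_nf
  have part1 : 1 - (d : ℝ) ^ (-(1 / p)) ≤ ε := by
    rw [hrw]
    have := Real.add_one_le_exp (-(Real.log d / p))
    linarith
  refine ⟨part1, ?_⟩
  intro x hx
  set c : ℝ := (d : ℝ) ^ (-(1 / p)) with hc
  have hc0 : 0 < c := Real.rpow_pos_of_pos hd0 _
  have hc1 : c ≤ 1 := Real.rpow_le_one_of_one_le_of_nonpos (le_of_lt hd1) (by linarith)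
  set s : ℝ := (1 - c) / ε with hs
  have hs0 : 0 ≤ s := div_nonneg (by linarith) (le_of_lt hε0)
  have hs1 : s ≤ 1 := by
    rw [hs, div_le_one hε0]; linarith
  have hconj : Real.HolderConjugate p q := Real.holderConjugate_iff.mpr ⟨hp1, by
    rw [← one_div, ← one_div]; exact hpq⟩
  -- Hölder: ∑ |x i| ≤ d^(1/p)
  have hsum_nonneg : (0:ℝ) ≤ ∑ i, |x i| ^ q :=
    Finset.sum_nonneg fun i _ => Real.rpow_nonneg (abs_nonneg _) _
  have hH : (∑ i, |x i|) ≤ (d : ℝ) ^ (1 / p) := by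
    have := Real.inner_le_Lp_mul_Lq Finset.univ (fun _ => (1:ℝ)) (fun i => |x i|) hconj
    simp only [one_mul, abs_abs, abs_one, Real.one_rpow, Finset.sum_const,
      Finset.card_univ, Fintype.card_fin, nsmul_eq_mul, mul_one] at this
    have h2 : (∑ i, |x i| ^ q) ^ (1 / q) ≤ 1 :=
      Real.rpow_le_one hsum_nonneg hx (le_of_lt hq1')
    calc (∑ i, |x i|) ≤ ((d:ℝ)) ^ (1/p) * (∑ i, |x i| ^ q) ^ (1 / q) := this
      _ ≤ (d:ℝ) ^ (1/p) * 1 := by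
          apply mul_le_mul_of_nonneg_left h2 (Real.rpow_nonneg (le_of_lt hd0) _)
      _ = (d:ℝ) ^ (1/p) := mul_one _
  refine ⟨c • x, s • x, ?_, ?_, ?_⟩
  · calc (∑ i, |(c • x) i|) = c * ∑ i, |x i| := by
          simp [abs_mul, abs_of_nonneg (le_of_lt hc0), Finset.mul_sum]
      _ ≤ c * (d : ℝ) ^ (1 / p) := mul_le_mul_of_nonneg_left hH (le_of_lt hc0)
      _ = 1 := by
          rw [hc, ← Real.rpow_add hd0]
          simp
  · calc (∑ i, |(s • x) i| ^ q) = s ^ q * ∑ i, |x i| ^ q := by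
          rw [Finset.mul_sum]
          refine Finset.sum_congr rfl fun i _ => ?_
          rw [Pi.smul_apply, smul_eq_mul, abs_mul, abs_of_nonneg hs0,
            Real.mul_rpow hs0 (abs_nonneg _)]
      _ ≤ 1 * 1 := by
          apply mul_le_mul (Real.rpow_le_one hs0 hs1 (le_of_lt hq0)) hx hsum_nonneg zero_le_one
      _ = 1 := one_mul 1
  · funext i
    simp only [Pi.add_apply, Pi.smul_apply, smul_eq_mul]
    have : ε * s = 1 - c := by
      rw [hs]; field_simp
    rw [← mul_assoc, this]; ring
end

section
/- Let p ≥ 2, q ∈ (1,2] with 1/p + 1/q = 1, let a ∈ ℝ^d with ‖a‖_p ≤ 1, and let x ∈ ℝ^d with ‖x‖_q ≤ 1 have nonzero entries. Define a random index J with P(J = j) = |x_j|^q/‖x‖_q^q and V = a_J ‖x‖_q^q / (sign(x_J)|x_J|^(q−1)). Then E[|V|^p] = ‖a‖_p^p · ‖x‖_q^p ≤ 1. -/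
theorem stmt_4 (d : ℕ) (p q : ℝ) (hp : 2 ≤ p) (hq1 : 1 < q) (hq2 : q ≤ 2)
    (hpq : 1 / p + 1 / q = 1) (a x : Fin d → ℝ)
    (ha : (∑ i, |a i| ^ p) ≤ 1)
    (hxnorm : ((∑ i, |x i| ^ q) ^ (1 / q)) ≤ 1)
    (hxne : ∀ j, x j ≠ 0) :
    (∑ j, (|x j| ^ q / (∑ i, |x i| ^ q)) *
        |a j * (∑ i, |x i| ^ q) / (Real.sign (x j) * |x j| ^ (q - 1))| ^ p) =
      (∑ i, |a i| ^ p) * ((∑ i, |x i| ^ q) ^ ((1:ℝ) / q)) ^ p ∧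
    (∑ j, (|x j| ^ q / (∑ i, |x i| ^ q)) *
        |a j * (∑ i, |x i| ^ q) / (Real.sign (x j) * |x j| ^ (q - 1))| ^ p) ≤ 1 := by
  have hq0 : (0:ℝ) < q := lt_trans one_pos hq1
  have hp1 : (1:ℝ) < p := lt_of_lt_of_le one_lt_two hp
  have hp0 : (0:ℝ) < p := lt_trans one_pos hp1
  set S : ℝ := ∑ i, |x i| ^ q with hSdef
  have hS0 : 0 ≤ S := Finset.sum_nonneg fun i _ =>
    Real.rpow_nonneg (abs_nonneg _) _
  rcases eq_or_lt_of_le hS0 with hS | hS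
  · -- S = 0 forces Fin d empty
    have hemp : IsEmpty (Fin d) := by
      constructor
      intro i
      have h1 : |x i| ^ q = 0 := by
        have := Finset.sum_eq_zero_iff_of_nonneg
          (fun i (_ : i ∈ Finset.univ) => Real.rpow_nonneg (abs_nonneg (x i)) q)
        rw [← hSdef] at this
        exact (this.mp hS.symm) i (Finset.mem_univ i)
      have := Real.rpow_eq_zero_iff_of_nonneg (abs_nonneg (x i)) |>.mp h1
      exact hxne i (abs_eq_zero.mp this.1)
    rw [← hS] at hxnorm ⊢
    simp only [Finset.univ_eq_empty, Finset.sum_empty]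
    rw [Real.zero_rpow (by positivity : (1:ℝ)/q ≠ 0), Real.zero_rpow (ne_of_gt hp0)]
    norm_num
  · -- S > 0
    have hpq' : p * (q - 1) = q := by
      have hpne : p ≠ 0 := ne_of_gt hp0
      have hqne : q ≠ 0 := ne_of_gt hq0
      field_simp at hpq
      nlinarith [hpq]
    have hterm : ∀ j, (|x j| ^ q / S) *
        |a j * S / (Real.sign (x j) * |x j| ^ (q - 1))| ^ p
        = |a j| ^ p * S ^ (p - 1) := by
      intro j
      have hxj : (0:ℝ) < |x j| := abs_pos.mpr (hxne j)
      have hsign : |Real.sign (x j)| = 1 := by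
        rcases Real.sign_apply_eq_of_ne_zero (x j) (hxne j) with h | h <;> rw [h] <;> norm_num
      have habs : |a j * S / (Real.sign (x j) * |x j| ^ (q - 1))|
          = |a j| * S / |x j| ^ (q - 1) := by
        rw [abs_div, abs_mul, abs_mul, hsign, one_mul, abs_of_nonneg hS0,
          abs_of_nonneg (Real.rpow_nonneg hxj.le _)]
      rw [habs]
      have hxq : (0:ℝ) < |x j| ^ q := Real.rpow_pos_of_pos hxj _
      have h1 : (|a j| * S / |x j| ^ (q-1)) ^ p
          = |a j| ^ p * S ^ p / |x j| ^ q := by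
        rw [Real.div_rpow (by positivity) (Real.rpow_nonneg hxj.le _),
            Real.mul_rpow (abs_nonneg _) hS0,
            ← Real.rpow_mul hxj.le, mul_comm (q-1) p, hpq']
      rw [h1]
      have hSp : S ^ p = S ^ (p-1) * S := by
        rw [← Real.rpow_add_one (ne_of_gt hS), sub_add_cancel]
      rw [hSp]
      field_simp
    have hsum : (∑ j, (|x j| ^ q / S) *
        |a j * S / (Real.sign (x j) * |x j| ^ (q - 1))| ^ p)
        = (∑ j, |a j| ^ p) * S ^ (p-1) := by
      simp_rw [hterm]
      rw [← Finset.sum_mul]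
    have hSp1 : (S ^ ((1:ℝ)/q)) ^ p = S ^ (p-1) := by
      rw [← Real.rpow_mul hS0]
      congr 1
      have hpne : p ≠ 0 := ne_of_gt hp0
      have hqne : q ≠ 0 := ne_of_gt hq0
      field_simp at hpq ⊢
      nlinarith [hpq]
    have ha0 : (0:ℝ) ≤ ∑ i, |a i| ^ p :=
      Finset.sum_nonneg fun i _ => Real.rpow_nonneg (abs_nonneg _) _
    have hS1 : S ≤ 1 := by
      by_contra h
      push_neg at h
      have := (Real.one_lt_rpow_iff_of_pos hS (y := 1/q)).mpr (Or.inl ⟨h, by positivity⟩)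
      linarith
    have hSle : S ^ (p-1) ≤ 1 := Real.rpow_le_one hS0 hS1 (by linarith)
    constructor
    · rw [hsum, hSp1]
    · rw [hsum]
      calc (∑ j, |a j| ^ p) * S ^ (p-1) ≤ 1 * 1 :=
            mul_le_mul ha hSle (Real.rpow_nonneg hS0 _) zero_le_one
        _ = 1 := one_mul 1
end

section
/- Let q ∈ (1,2], and in ℝ^d (d ≥ 2) fix an index l ∈ {2,…,d}. Define n ≥ 3 row vectors: A_1 = −2^(−1/p) e_1 + 2^(−1/p) e_l, and A_i = 2^(−1/p) e_1 + 2^(−1/p) e_l for all i ∈ {2,…,n}, where 1/p + 1/q = 1. Then max over x in the ℓq unit ball of min over i of A_i·x equals 2^(−1/p). -/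
theorem stmt_11 (d n : ℕ) (hd : 2 ≤ d) (hn : 3 ≤ n)
    (p q : ℝ) (hq1 : 1 < q) (hq2 : q ≤ 2) (hpq : 1 / p + 1 / q = 1)
    (l : Fin d) (hl : l ≠ ⟨0, by omega⟩)
    (A : Fin n → Fin d → ℝ)
    (hA0 : A ⟨0, by omega⟩ = fun j => if j = ⟨0, by omega⟩ then -((2:ℝ) ^ (-(1 / p)))
                          else if j = l then (2:ℝ) ^ (-(1 / p)) else 0)
    (hAi : ∀ i : Fin n, i ≠ ⟨0, by omega⟩ →
      A i = fun j => if j = ⟨0, by omega⟩ ∨ j = l then (2:ℝ) ^ (-(1 / p)) else 0) :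
    (∃ x : Fin d → ℝ, (∑ j, |x j| ^ q) ≤ 1 ∧
      ∀ i, (2:ℝ) ^ (-(1 / p)) ≤ ∑ j, A i j * x j) ∧
    (∀ x : Fin d → ℝ, (∑ j, |x j| ^ q) ≤ 1 →
      ∃ i, (∑ j, A i j * x j) ≤ (2:ℝ) ^ (-(1 / p))) := by
  set c : ℝ := (2:ℝ) ^ (-(1 / p)) with hc
  have hcpos : 0 < c := Real.rpow_pos_of_pos (by norm_num) _
  have hq0 : 0 < q := by linarith
  set z0 : Fin d := ⟨0, by omega⟩ with hz0
  constructor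
  · refine ⟨fun j => if j = l then 1 else 0, ?_, ?_⟩
    · have : (∑ j, |(if j = l then (1:ℝ) else 0)| ^ q) = 1 := by
        rw [Finset.sum_eq_single l]
        · simp
        · intro b _ hb
          simp [hb, Real.zero_rpow (ne_of_gt hq0)]
        · simp
      rw [this]
    · intro i
      have key : ∀ i : Fin n, A i l = c := by
        intro i
        by_cases hi : i = ⟨0, by omega⟩
        · rw [hi, hA0]; simp [hl]
        · rw [hAi i hi]; simp
      have : (∑ j, A i j * (if j = l then (1:ℝ) else 0)) = A i l := by
        rw [Finset.sum_eq_single l]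
        · simp
        · intro b _ hb; simp [hb]
        · simp
      rw [this, key i]
  · intro x hx
    have hterm : ∀ j ∈ Finset.univ, 0 ≤ |x j| ^ q :=
      fun j _ => Real.rpow_nonneg (abs_nonneg _) q
    have hxl1 : |x l| ^ q ≤ 1 :=
      le_trans (Finset.single_le_sum hterm (Finset.mem_univ l)) hx
    have hxl : x l ≤ 1 := by
      by_contra h
      push_neg at h
      have h1 : 1 < |x l| := lt_of_lt_of_le h (le_abs_self _)
      have : 1 < |x l| ^ q := by
        rw [Real.one_lt_rpow_iff_of_pos (by linarith)]
        left; exact ⟨h1, hq0⟩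
      linarith
    by_cases h0 : 0 ≤ x z0
    · refine ⟨⟨0, by omega⟩, ?_⟩
      have hs : (∑ j, A ⟨0, by omega⟩ j * x j) = -c * x z0 + c * x l := by
        rw [hA0]
        rw [Fintype.sum_eq_add z0 l (by exact fun h => hl h.symm)
          (fun k hk => by simp [hk.1, hk.2])]
        simp only []
        rw [if_neg hl, if_pos trivial, if_pos trivial]
      rw [hs]
      nlinarith
    · push_neg at h0
      refine ⟨⟨1, by omega⟩, ?_⟩
      have h1 : (⟨1, by omega⟩ : Fin n) ≠ ⟨0, by omega⟩ := by
        simp [Fin.ext_iff]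
      have hs : (∑ j, A ⟨1, by omega⟩ j * x j) = c * x z0 + c * x l := by
        rw [hAi _ h1]
        rw [Fintype.sum_eq_add z0 l (by exact fun h => hl h.symm)
          (fun k hk => by simp [hk.1, hk.2])]
        simp only []
        rw [if_pos (show True ∨ z0 = l from Or.inl trivial),
          if_pos (show l = z0 ∨ True from Or.inr trivial)]
      rw [hs]
      nlinarith
end
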